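/- Let R be a unital associative ring, n ≥ 1, and let Ψ = J₂ ∘ Φ ∘ J₂. Then Ψ and Φ⁻¹ have the same domain, which both map bijectively onto dom(Φ), and Ψ(A) ∼ Φ⁻¹(A) for every A ∈ dom(Ψ) = dom(Φ⁻¹). Consequently Ψ(A) ∼ Φ⁻¹(A) ∼ J⁻¹(A) for every such A. -/

import Mathlib

open Matrix

section KontsevichDefs

variable {R : Type*} [Ring R]

/-- `J₂`: the transposed Hadamard inverse, `J₂(M)_{jk} = (M_{kj})⁻¹`
(with `Ring.inverse`, which is the two-sided inverse on units and `0` elsewhere). -/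
noncomputable def J2 {m : Type*} (M : Matrix m m R) : Matrix m m R :=
  Matrix.of fun j k => Ring.inverse (M k j)

variable {m : Type*} [Fintype m] [DecidableEq m]

/-- `J = J₂ ∘ J₁`, where `J₁(M) = M⁻¹` is the usual matrix inverse. -/
noncomputable def Jmap (M : Matrix m m R) : Matrix m m R := J2 (Ring.inverse M)

/-- `J⁻¹ = J₁ ∘ J₂`. -/
noncomputable def JinvMap (M : Matrix m m R) : Matrix m m R := Ring.inverse (J2 M)

/-- `dom(J)`: `M` invertible and all entries of `M⁻¹` invertible. -/
def domJ (M : Matrix m m R) : Prop :=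
  IsUnit M ∧ ∀ j k, IsUnit (Ring.inverse M j k)

/-- `dom(J⁻¹)`: all entries of `M` invertible and `J₂(M)` invertible. -/
def domJinv (M : Matrix m m R) : Prop :=
  (∀ j k, IsUnit (M j k)) ∧ IsUnit (J2 M)

/-- `dom(Jⁿ)` defined recursively: `M ∈ dom(Jⁿ⁺¹)` iff `M ∈ dom(J)` and `J(M) ∈ dom(Jⁿ)`. -/
def domJpow : ℕ → Matrix m m R → Prop
  | 0, _ => True
  | n + 1, M => domJ M ∧ domJpow n (Jmap M)

/-- `A ∼ B`: `B = D₁⁻¹ A D₂` for diagonal matrices `D₁, D₂` with invertible diagonal entries. -/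
def simRel (A B : Matrix m m R) : Prop :=
  ∃ d₁ d₂ : m → Rˣ,
    B = Matrix.diagonal (fun i => (((d₁ i)⁻¹ : Rˣ) : R)) * A *
        Matrix.diagonal (fun i => ((d₂ i : Rˣ) : R))

/-- entrywise conjugation `x⁻¹ A x` by an invertible ring element. -/
def conjEntry {m' : Type*} (x : Rˣ) (A : Matrix m' m' R) : Matrix m' m' R :=
  Matrix.of fun j k => ((x⁻¹ : Rˣ) : R) * A j k * (x : R)

/-- `M̂ₙ(R)`: first row and first column consist entirely of `1`'s. -/
def Mhat {m' : Type*} [Zero m'] (A : Matrix m' m' R) : Prop :=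
  ∀ k, A 0 k = 1 ∧ A k 0 = 1

/-- `Λ^L(A)_{jk} = a₁₁ a_{j1}⁻¹ a_{jk} a_{1k}⁻¹`. -/
noncomputable def LamL {m' : Type*} [Zero m'] (A : Matrix m' m' R) : Matrix m' m' R :=
  Matrix.of fun j k => A 0 0 * Ring.inverse (A j 0) * A j k * Ring.inverse (A 0 k)

/-- `Λ^R(A)_{jk} = a_{j1}⁻¹ a_{jk} a_{1k}⁻¹ a₁₁`. -/
noncomputable def LamR {m' : Type*} [Zero m'] (A : Matrix m' m' R) : Matrix m' m' R :=
  Matrix.of fun j k => Ring.inverse (A j 0) * A j k * Ring.inverse (A 0 k) * A 0 0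

/-- `Φ(A) = J₂(Λ^L(A⁻¹))`. -/
noncomputable def Phi [Zero m] (A : Matrix m m R) : Matrix m m R := J2 (LamL (Ring.inverse A))

/-- `dom(Φ)`: `A ∈ M̂ₙ(R)`, all entries of `A` invertible, `A` invertible,
all entries of `A⁻¹` invertible. -/
def domPhi [Zero m] (A : Matrix m m R) : Prop :=
  Mhat A ∧ (∀ j k, IsUnit (A j k)) ∧ IsUnit A ∧ ∀ j k, IsUnit (Ring.inverse A j k)

/-- `Φ⁻¹(B) = Λ^R(J⁻¹(B)) = Λ^R((J₂ B)⁻¹)`. -/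
noncomputable def PhiInv [Zero m] (B : Matrix m m R) : Matrix m m R := LamR (Ring.inverse (J2 B))

/-- `dom(Φ⁻¹)`: `B ∈ M̂ₙ(R)`, all entries of `B` invertible, `J₂(B)` invertible,
all entries of `J₂(B)⁻¹` invertible. -/
def domPhiInv [Zero m] (B : Matrix m m R) : Prop :=
  Mhat B ∧ (∀ j k, IsUnit (B j k)) ∧ IsUnit (J2 B) ∧ ∀ j k, IsUnit (Ring.inverse (J2 B) j k)

/-- `dom(Φⁿ)` defined recursively. -/
def domPhipow [Zero m] : ℕ → Matrix m m R → Prop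
  | 0, _ => True
  | n + 1, A => domPhi A ∧ domPhipow n (Phi A)

/-- `Ψ = J₂ ∘ Φ ∘ J₂`. -/
noncomputable def Psi [Zero m] (A : Matrix m m R) : Matrix m m R := J2 (Phi (J2 A))

/-- `dom(Ψ)`: `A ∈ M̂ₙ(R)`, all entries of `A` invertible, `J₂(A) ∈ dom(Φ)`. -/
def domPsi [Zero m] (A : Matrix m m R) : Prop :=
  Mhat A ∧ (∀ j k, IsUnit (A j k)) ∧ domPhi (J2 A)

/-- every square submatrix (equinumerous injective choices of rows and columns) is invertible. -/
def allSquareSubInv (M : Matrix (Fin 3) (Fin 3) R) : Prop :=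
  ∀ (k : ℕ) (r c : Fin k → Fin 3), Function.Injective r → Function.Injective c →
    IsUnit (M.submatrix r c)

/-- only the `1×1` and `2×2` submatrices are required to be invertible. -/
def sub12Inv (M : Matrix (Fin 3) (Fin 3) R) : Prop :=
  (∀ j k, IsUnit (M j k)) ∧
  ∀ (r c : Fin 2 → Fin 3), Function.Injective r → Function.Injective c →
    IsUnit (M.submatrix r c)

/-- `S`: all square submatrices of `M` are invertible and `J₂(M)` is invertible. -/
def Sset (R : Type*) [Ring R] : Set (Matrix (Fin 3) (Fin 3) R) :=
  {M | allSquareSubInv M ∧ IsUnit (J2 M)}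

/-- `Ŝ = S ∩ M̂₃(R)`. -/
def Shat (R : Type*) [Ring R] : Set (Matrix (Fin 3) (Fin 3) R) :=
  {M | M ∈ Sset R ∧ Mhat M}

end KontsevichDefs

section AuxLemmas

lemma Ru {S : Type*} [MonoidWithZero S] {a : S} (h : IsUnit a) :
    Ring.inverse a = ((h.unit⁻¹ : Sˣ) : S) := by
  conv_lhs => rw [← h.unit_spec]
  exact Ring.inverse_unit _

lemma ringInverse_ringInverse {S : Type*} [MonoidWithZero S] {a : S} (h : IsUnit a) :
    Ring.inverse (Ring.inverse a) = a := by
  conv_lhs => rw [← h.unit_spec]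
  rw [Ring.inverse_unit, Ring.inverse_unit, inv_inv, h.unit_spec]

variable {R : Type*} [Ring R]

lemma J2_apply {m' : Type*} (M : Matrix m' m' R) (j k : m') :
    J2 M j k = Ring.inverse (M k j) := rfl

lemma J2_J2 {m' : Type*} {M : Matrix m' m' R} (h : ∀ j k, IsUnit (M j k)) :
    J2 (J2 M) = M := by
  ext j k
  simp only [J2, Matrix.of_apply]
  exact ringInverse_ringInverse (h j k)

lemma Mhat_J2 {m' : Type*} [Zero m'] {M : Matrix m' m' R} (h : Mhat M) : Mhat (J2 M) := by
  intro k
  simp [J2, (h k).1, (h k).2]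


lemma J2_entries_isUnit {m' : Type*} {M : Matrix m' m' R} (h : ∀ j k, IsUnit (M j k)) :
    ∀ j k, IsUnit (J2 M j k) := fun j k => isUnit_ringInverse.mpr (h k j)

variable {m : Type*} [Fintype m] [DecidableEq m]

/-- diagonal matrix of units, as a unit in the matrix ring. -/
noncomputable def diagU (d : m → Rˣ) : (Matrix m m R)ˣ where
  val := Matrix.diagonal fun i => (d i : R)
  inv := Matrix.diagonal fun i => ((d i)⁻¹ : Rˣ)
  val_inv := by rw [Matrix.diagonal_mul_diagonal]; simp
  inv_val := by rw [Matrix.diagonal_mul_diagonal]; simp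

lemma diagU_coe (d : m → Rˣ) :
    ((diagU d : (Matrix m m R)ˣ).val) = Matrix.diagonal fun i => ((d i : Rˣ) : R) := rfl

lemma diagU_inv_coe (d : m → Rˣ) :
    (((diagU d : (Matrix m m R)ˣ))⁻¹.val) = Matrix.diagonal fun i => (((d i)⁻¹ : Rˣ) : R) := rfl

lemma sandwich {S : Type*} [MonoidWithZero S] (u v : Sˣ) {c : S} (hc : IsUnit c) :
    IsUnit ((u : S) * c * v) ∧
      Ring.inverse ((u : S) * c * v) = ↑v⁻¹ * Ring.inverse c * ↑u⁻¹ := by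
  obtain ⟨w, rfl⟩ := hc
  have h : (u : S) * ↑w * ↑v = ↑(u * w * v) := by simp [Units.val_mul]
  rw [h]
  refine ⟨Units.isUnit _, ?_⟩
  rw [Ring.inverse_unit, Ring.inverse_unit]
  simp [_root_.mul_inv_rev, Units.val_mul, mul_assoc]

end AuxLemmas
set_option maxHeartbeats 1000000

section LamLemmas

variable {R : Type*} [Ring R] {m : Type*} [Fintype m] [DecidableEq m] [Zero m]

lemma lamL_apply (C : Matrix m m R) (j k : m) :
    LamL C j k = C 0 0 * Ring.inverse (C j 0) * C j k * Ring.inverse (C 0 k) := rfl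

lemma lamR_apply (C : Matrix m m R) (j k : m) :
    LamR C j k = Ring.inverse (C j 0) * C j k * Ring.inverse (C 0 k) * C 0 0 := rfl

lemma mhat_lamL {C : Matrix m m R} (hc : ∀ j k, IsUnit (C j k)) : Mhat (LamL C) := by
  intro k
  constructor
  · show C 0 0 * Ring.inverse (C 0 0) * C 0 k * Ring.inverse (C 0 k) = 1
    rw [Ring.mul_inverse_cancel _ (hc 0 0), one_mul, Ring.mul_inverse_cancel _ (hc 0 k)]
  · show C 0 0 * Ring.inverse (C k 0) * C k 0 * Ring.inverse (C 0 0) = 1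
    rw [mul_assoc (C 0 0), Ring.inverse_mul_cancel _ (hc k 0), mul_one,
      Ring.mul_inverse_cancel _ (hc 0 0)]

lemma mhat_lamR {C : Matrix m m R} (hc : ∀ j k, IsUnit (C j k)) : Mhat (LamR C) := by
  intro k
  constructor
  · show Ring.inverse (C 0 0) * C 0 k * Ring.inverse (C 0 k) * C 0 0 = 1
    rw [mul_assoc (Ring.inverse (C 0 0)), Ring.mul_inverse_cancel _ (hc 0 k), mul_one,
      Ring.inverse_mul_cancel _ (hc 0 0)]
  · show Ring.inverse (C k 0) * C k 0 * Ring.inverse (C 0 0) * C 0 0 = 1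
    rw [Ring.inverse_mul_cancel _ (hc k 0), one_mul, Ring.inverse_mul_cancel _ (hc 0 0)]

lemma lamL_entries_isUnit {C : Matrix m m R} (hc : ∀ j k, IsUnit (C j k)) :
    ∀ j k, IsUnit (LamL C j k) := fun j k => by
  rw [lamL_apply]
  exact (((hc 0 0).mul (isUnit_ringInverse.mpr (hc j 0))).mul (hc j k)).mul
    (isUnit_ringInverse.mpr (hc 0 k))

lemma lamR_entries_isUnit {C : Matrix m m R} (hc : ∀ j k, IsUnit (C j k)) :
    ∀ j k, IsUnit (LamR C j k) := fun j k => by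
  rw [lamR_apply]
  exact (((isUnit_ringInverse.mpr (hc j 0)).mul (hc j k)).mul
    (isUnit_ringInverse.mpr (hc 0 k))).mul (hc 0 0)

lemma lamL_factor {C : Matrix m m R} (hc : ∀ j k, IsUnit (C j k)) :
    LamL C = (diagU (fun j => (hc 0 0).unit * ((hc j 0).unit)⁻¹) : (Matrix m m R)ˣ).val * C *
        (diagU (fun k => ((hc 0 k).unit)⁻¹) : (Matrix m m R)ˣ).val := by
  ext j k
  rw [diagU_coe, diagU_coe]
  rw [Matrix.mul_diagonal, Matrix.diagonal_mul, lamL_apply, Ru (hc j 0), Ru (hc 0 k)]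
  simp [Units.val_mul, (hc 0 0).unit_spec, mul_assoc]

lemma lamR_factor {C : Matrix m m R} (hc : ∀ j k, IsUnit (C j k)) :
    LamR C = (diagU (fun j => ((hc j 0).unit)⁻¹) : (Matrix m m R)ˣ).val * C *
        (diagU (fun k => ((hc 0 k).unit)⁻¹ * (hc 0 0).unit) : (Matrix m m R)ˣ).val := by
  ext j k
  rw [diagU_coe, diagU_coe]
  rw [Matrix.mul_diagonal, Matrix.diagonal_mul, lamR_apply, Ru (hc j 0), Ru (hc 0 k)]
  simp [Units.val_mul, (hc 0 0).unit_spec, mul_assoc]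

lemma lamL_inv {C : Matrix m m R} (hc : ∀ j k, IsUnit (C j k)) (hC : IsUnit C) :
    IsUnit (LamL C) ∧ ∀ j k, Ring.inverse (LamL C) j k =
      ((hc 0 j).unit : R) * Ring.inverse C j k *
        ((((hc 0 0).unit * ((hc k 0).unit)⁻¹)⁻¹ : Rˣ) : R) := by
  rw [lamL_factor hc]
  obtain ⟨hU, hI⟩ := sandwich (diagU (fun j => (hc 0 0).unit * ((hc j 0).unit)⁻¹))
    (diagU (fun k => ((hc 0 k).unit)⁻¹)) hC
  refine ⟨hU, fun j k => ?_⟩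
  rw [hI]
  rw [diagU_inv_coe, diagU_inv_coe, Matrix.mul_diagonal, Matrix.diagonal_mul, inv_inv]

lemma lamR_inv {C : Matrix m m R} (hc : ∀ j k, IsUnit (C j k)) (hC : IsUnit C) :
    IsUnit (LamR C) ∧ ∀ j k, Ring.inverse (LamR C) j k =
      (((((hc 0 j).unit)⁻¹ * (hc 0 0).unit)⁻¹ : Rˣ) : R) * Ring.inverse C j k *
        ((hc k 0).unit : R) := by
  rw [lamR_factor hc]
  obtain ⟨hU, hI⟩ := sandwich (diagU (fun j => ((hc j 0).unit)⁻¹))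
    (diagU (fun k => ((hc 0 k).unit)⁻¹ * (hc 0 0).unit)) hC
  refine ⟨hU, fun j k => ?_⟩
  rw [hI]
  rw [diagU_inv_coe, diagU_inv_coe, Matrix.mul_diagonal, Matrix.diagonal_mul, inv_inv]

end LamLemmas
section MainLemmas

variable {R : Type*} [Ring R] {m : Type*} [Fintype m] [DecidableEq m] [Zero m]

lemma calc1 {R : Type*} [Ring R] (p q r : Rˣ) (x : R) :
    Ring.inverse ((p : R) * 1 * ↑((q * q⁻¹)⁻¹)) * ((p : R) * x * ↑((q * r⁻¹)⁻¹)) *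
      Ring.inverse ((q : R) * 1 * ↑((q * r⁻¹)⁻¹)) * ((q : R) * 1 * ↑((q * q⁻¹)⁻¹)) = x := by
  simp only [mul_inv_cancel, inv_one, Units.val_one, one_mul, mul_one]
  rw [← Units.val_mul, Ring.inverse_unit, Ring.inverse_unit]
  simp [Units.val_mul, _root_.mul_inv_rev, inv_inv, mul_assoc, Units.mul_inv_cancel_left,
    Units.inv_mul_cancel_left, Units.mul_inv, Units.inv_mul]

lemma calc2 {R : Type*} [Ring R] (a b c : Rˣ) (y : R) :
    ((((b⁻¹ * b)⁻¹ : Rˣ) : R) * 1 * ↑b) * Ring.inverse ((((a⁻¹ * b)⁻¹ : Rˣ) : R) * 1 * ↑b) *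
      ((((a⁻¹ * b)⁻¹ : Rˣ) : R) * y * ↑c) *
      Ring.inverse ((((b⁻¹ * b)⁻¹ : Rˣ) : R) * 1 * ↑c) = y := by
  simp only [inv_mul_cancel, inv_one, Units.val_one, one_mul, mul_one]
  rw [← Units.val_mul, Ring.inverse_unit, Ring.inverse_unit]
  simp [Units.val_mul, _root_.mul_inv_rev, inv_inv, mul_assoc, Units.mul_inv_cancel_left,
    Units.inv_mul_cancel_left, Units.mul_inv, Units.inv_mul]

lemma lamL_domPhi {C : Matrix m m R} (hc : ∀ j k, IsUnit (C j k)) (hC : IsUnit C)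
    (hc' : ∀ j k, IsUnit (Ring.inverse C j k)) : domPhi (LamL C) := by
  refine ⟨mhat_lamL hc, lamL_entries_isUnit hc, (lamL_inv hc hC).1, fun j k => ?_⟩
  rw [(lamL_inv hc hC).2 j k]
  exact ((Units.isUnit _).mul (hc' j k)).mul (Units.isUnit _)

lemma lamR_domPhi {C : Matrix m m R} (hc : ∀ j k, IsUnit (C j k)) (hC : IsUnit C)
    (hc' : ∀ j k, IsUnit (Ring.inverse C j k)) : domPhi (LamR C) := by
  refine ⟨mhat_lamR hc, lamR_entries_isUnit hc, (lamR_inv hc hC).1, fun j k => ?_⟩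
  rw [(lamR_inv hc hC).2 j k]
  exact ((Units.isUnit _).mul (hc' j k)).mul (Units.isUnit _)

lemma phi_mem {A : Matrix m m R} (hA : domPhi A) : domPhiInv (Phi A) := by
  obtain ⟨h1, h2, h3, h4⟩ := hA
  have hBu : IsUnit (Ring.inverse A) := isUnit_ringInverse.mpr h3
  have hLent := lamL_entries_isUnit h4
  have hpair := lamL_inv h4 hBu
  refine ⟨Mhat_J2 (mhat_lamL h4), J2_entries_isUnit hLent, ?_, ?_⟩
  · rw [Phi, J2_J2 hLent]; exact hpair.1
  · rw [Phi, J2_J2 hLent]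
    intro j k
    rw [hpair.2 j k, ringInverse_ringInverse h3]
    exact ((Units.isUnit _).mul (h2 j k)).mul (Units.isUnit _)

lemma phiInv_phi {A : Matrix m m R} (hA : domPhi A) : PhiInv (Phi A) = A := by
  obtain ⟨h1, h2, h3, h4⟩ := hA
  have hBu : IsUnit (Ring.inverse A) := isUnit_ringInverse.mpr h3
  have hLent := lamL_entries_isUnit h4
  have hpair := lamL_inv h4 hBu
  have hE : ∀ j k, Ring.inverse (LamL (Ring.inverse A)) j k
      = ((h4 0 j).unit : R) * A j k *
        ((((h4 0 0).unit * ((h4 k 0).unit)⁻¹)⁻¹ : Rˣ) : R) := by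
    intro j k
    rw [hpair.2 j k, ringInverse_ringInverse h3]
  rw [PhiInv, Phi, J2_J2 hLent]
  ext j k
  rw [lamR_apply, hE j k, hE j 0, hE 0 k, hE 0 0, (h1 j).2, (h1 k).1, (h1 0).1]
  exact calc1 _ _ _ _

lemma phiInv_mem {B : Matrix m m R} (hB : domPhiInv B) : domPhi (PhiInv B) := by
  obtain ⟨h1, h2, h3, h4⟩ := hB
  exact lamR_domPhi h4 (isUnit_ringInverse.mpr h3) (fun j k => by
    rw [ringInverse_ringInverse h3]; exact J2_entries_isUnit h2 j k)

lemma phi_phiInv {B : Matrix m m R} (hB : domPhiInv B) : Phi (PhiInv B) = B := by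
  obtain ⟨h1, h2, h3, h4⟩ := hB
  have hCu : IsUnit (Ring.inverse (J2 B)) := isUnit_ringInverse.mpr h3
  have hpair := lamR_inv h4 hCu
  have hF : ∀ j k, Ring.inverse (PhiInv B) j k
      = (((((h4 0 j).unit)⁻¹ * (h4 0 0).unit)⁻¹ : Rˣ) : R) * Ring.inverse (B k j) *
        ((h4 k 0).unit : R) := by
    intro j k
    rw [PhiInv, hpair.2 j k, ringInverse_ringInverse h3, J2_apply]
  have key : LamL (Ring.inverse (PhiInv B)) = J2 B := by
    ext j k
    rw [lamL_apply, J2_apply, hF j k, hF j 0, hF 0 k, hF 0 0,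
      (h1 j).1, (h1 k).2, (h1 0).1, Ring.inverse_one]
    exact calc2 _ _ _ _
  rw [Phi, key, J2_J2 h2]

end MainLemmas
section PsiLemmas

variable {R : Type*} [Ring R] {m : Type*} [Fintype m] [DecidableEq m] [Zero m]

lemma domPhiInv_J2 {P : Matrix m m R} (h : domPhi P) : domPhiInv (J2 P) := by
  obtain ⟨h1, h2, h3, h4⟩ := h
  refine ⟨Mhat_J2 h1, J2_entries_isUnit h2, ?_, ?_⟩
  · rw [J2_J2 h2]; exact h3
  · rw [J2_J2 h2]; exact h4

lemma domPsi_iff_domPhiInv {A : Matrix m m R} : domPsi A ↔ domPhiInv A := by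
  constructor
  · rintro ⟨h1, h2, _, _, g3, g4⟩
    exact ⟨h1, h2, g3, g4⟩
  · rintro ⟨h1, h2, g3, g4⟩
    exact ⟨h1, h2, Mhat_J2 h1, J2_entries_isUnit h2, g3, g4⟩

lemma psi_eq_lamL {A : Matrix m m R} (hA : domPsi A) :
    Psi A = LamL (Ring.inverse (J2 A)) := by
  obtain ⟨h1, h2, _, _, _, g4⟩ := hA
  rw [Psi, Phi, J2_J2 (lamL_entries_isUnit g4)]

lemma psi_mem {A : Matrix m m R} (hA : domPsi A) : domPhi (Psi A) := by
  obtain ⟨h1, h2, g3, g4⟩ := domPsi_iff_domPhiInv.mp hA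
  rw [psi_eq_lamL hA]
  exact lamL_domPhi g4 (isUnit_ringInverse.mpr g3) (fun j k => by
    rw [ringInverse_ringInverse g3]; exact J2_entries_isUnit h2 j k)

lemma psi_leftInv {A : Matrix m m R} (hA : domPsi A) : J2 (PhiInv (J2 (Psi A))) = A := by
  obtain ⟨h1, h2, hJ⟩ := hA
  have hPhi : domPhiInv (Phi (J2 A)) := phi_mem hJ
  rw [Psi, J2_J2 hPhi.2.1, phiInv_phi hJ, J2_J2 h2]

lemma psi_surj {B : Matrix m m R} (hB : domPhi B) :
    domPsi (J2 (PhiInv (J2 B))) ∧ Psi (J2 (PhiInv (J2 B))) = B := by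
  have hJB := domPhiInv_J2 hB
  have hP : domPhi (PhiInv (J2 B)) := phiInv_mem hJB
  have hA : domPsi (J2 (PhiInv (J2 B))) := by
    refine ⟨Mhat_J2 hP.1, J2_entries_isUnit hP.2.1, ?_⟩
    rw [J2_J2 hP.2.1]; exact hP
  refine ⟨hA, ?_⟩
  rw [Psi, J2_J2 hP.2.1, phi_phiInv hJB, J2_J2 hB.2.1]

lemma simRels {A : Matrix m m R} (hA : domPsi A) :
    simRel (PhiInv A) (Psi A) ∧ simRel (JinvMap A) (PhiInv A) ∧
      simRel (JinvMap A) (Psi A) := by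
  obtain ⟨h1, h2, g3, g4⟩ := domPsi_iff_domPhiInv.mp hA
  choose u hu using g4
  have hPhiInv : PhiInv A = LamR (Ring.inverse (J2 A)) := rfl
  have hJ : JinvMap A = Ring.inverse (J2 A) := rfl
  refine ⟨⟨fun _ => (u 0 0)⁻¹, fun _ => (u 0 0)⁻¹, ?_⟩,
          ⟨fun j => u j 0, fun k => (u 0 k)⁻¹ * u 0 0, ?_⟩,
          ⟨fun j => u j 0 * (u 0 0)⁻¹, fun k => (u 0 k)⁻¹, ?_⟩⟩
  · rw [psi_eq_lamL hA, hPhiInv]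
    ext j k
    rw [Matrix.mul_diagonal, Matrix.diagonal_mul, lamL_apply, lamR_apply,
      ← hu j 0, ← hu 0 k, ← hu 0 0, ← hu j k,
      Ring.inverse_unit, Ring.inverse_unit]
    simp [Units.val_mul, _root_.mul_inv_rev, inv_inv, mul_assoc,
      Units.mul_inv_cancel_left, Units.inv_mul_cancel_left, Units.mul_inv, Units.inv_mul]
  · rw [hPhiInv, hJ]
    ext j k
    rw [Matrix.mul_diagonal, Matrix.diagonal_mul, lamR_apply,
      ← hu j 0, ← hu 0 k, ← hu 0 0, ← hu j k,
      Ring.inverse_unit, Ring.inverse_unit]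
    simp [Units.val_mul, mul_assoc]
  · rw [psi_eq_lamL hA, hJ]
    ext j k
    rw [Matrix.mul_diagonal, Matrix.diagonal_mul, lamL_apply,
      ← hu j 0, ← hu 0 k, ← hu 0 0, ← hu j k,
      Ring.inverse_unit, Ring.inverse_unit]
    simp [Units.val_mul, _root_.mul_inv_rev, inv_inv, mul_assoc]

end PsiLemmas
/-- `Ψ = J₂ ∘ Φ ∘ J₂` and `Φ⁻¹` have the same domain, which both map
bijectively onto `dom(Φ)`, and `Ψ(A) ∼ Φ⁻¹(A)` for every `A` in this common domain;
consequently `Ψ(A) ∼ Φ⁻¹(A) ∼ J⁻¹(A)`. -/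
theorem psi_phiinv_equivalent {R : Type*} [Ring R] (n : ℕ) :
    (∀ A : Matrix (Fin (n + 1)) (Fin (n + 1)) R, domPsi A ↔ domPhiInv A) ∧
    Set.BijOn Psi {A : Matrix (Fin (n + 1)) (Fin (n + 1)) R | domPsi A} {A | domPhi A} ∧
    Set.BijOn PhiInv {A : Matrix (Fin (n + 1)) (Fin (n + 1)) R | domPhiInv A} {A | domPhi A} ∧
    (∀ A : Matrix (Fin (n + 1)) (Fin (n + 1)) R, domPsi A →
      simRel (PhiInv A) (Psi A) ∧ simRel (JinvMap A) (PhiInv A) ∧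
        simRel (JinvMap A) (Psi A)) := by
  refine ⟨fun A => domPsi_iff_domPhiInv, ⟨fun A hA => psi_mem hA, ?_, ?_⟩,
    ⟨fun B hB => phiInv_mem hB, ?_, ?_⟩, fun A hA => ?_⟩
  · intro A hA A' hA' h
    rw [← psi_leftInv hA, ← psi_leftInv hA', h]
  · intro B hB
    exact ⟨J2 (PhiInv (J2 B)), (psi_surj hB).1, (psi_surj hB).2⟩
  · intro B hB B' hB' h
    rw [← phi_phiInv hB, ← phi_phiInv hB', h]
  · intro A hA
    exact ⟨Phi A, phi_mem hA, phiInv_phi hA⟩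
  · exact simRels hA
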